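/- (Abstract reduction step in the co-normal jump estimate.) Let E be a real inner product space and let P, P⁺, P⁻ : E → E be linear maps that are symmetric, i.e. ⟨T u, v⟩ = ⟨u, T v⟩ for all u, v ∈ E and T ∈ {P, P⁺, P⁻}. Let b, b⁺, b⁻, n⁺, n⁻, m ∈ E and β, ε₁, ε₂ ≥ 0 satisfy: P b = b; P⁺ n⁺ = n⁺ and P⁻ n⁻ = n⁻; ‖n⁺‖ ≤ 1 and ‖n⁻‖ ≤ 1; ‖b‖ ≤ β; ‖b⁺ − P⁺ b‖ ≤ ε₁ and ‖b⁻ − P⁻ b‖ ≤ ε₁; ‖P n⁺ − m‖ ≤ ε₂ and ‖P n⁻ + m‖ ≤ ε₂. Then |⟨b⁺, n⁺⟩ + ⟨b⁻, n⁻⟩| ≤ 2ε₁ + 2β·ε₂. -/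

import Mathlib

open scoped RealInnerProductSpace

/-- Abstract reduction step in the co-normal jump estimate: the normal-weighted jump of the
discrete velocity is controlled by the velocity approximation error and the deviation of the
projected discrete co-normals from the (exactly opposite) lifted co-normals. -/
theorem conormal_jump_estimate {E : Type*} [NormedAddCommGroup E] [InnerProductSpace ℝ E]
    (P Pp Pm : E →ₗ[ℝ] E)
    (hPsym : ∀ u v : E, ⟪P u, v⟫ = ⟪u, P v⟫)
    (hPpsym : ∀ u v : E, ⟪Pp u, v⟫ = ⟪u, Pp v⟫)
    (hPmsym : ∀ u v : E, ⟪Pm u, v⟫ = ⟪u, Pm v⟫)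
    (b bp bm np nm m : E) (β ε₁ ε₂ : ℝ)
    (hβ : 0 ≤ β) (hε₁ : 0 ≤ ε₁) (hε₂ : 0 ≤ ε₂)
    (hPb : P b = b) (hnp : Pp np = np) (hnm : Pm nm = nm)
    (hnp1 : ‖np‖ ≤ 1) (hnm1 : ‖nm‖ ≤ 1) (hbβ : ‖b‖ ≤ β)
    (hbp : ‖bp - Pp b‖ ≤ ε₁) (hbm : ‖bm - Pm b‖ ≤ ε₁)
    (hmp : ‖P np - m‖ ≤ ε₂) (hmm : ‖P nm + m‖ ≤ ε₂) :
    |⟪bp, np⟫ + ⟪bm, nm⟫| ≤ 2 * ε₁ + 2 * β * ε₂ := by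
  have h1 : ⟪Pp b, np⟫ = ⟪b, P np⟫ := by
    rw [hPpsym, hnp]
    conv_lhs => rw [← hPb]
    rw [hPsym]
  have h2 : ⟪Pm b, nm⟫ = ⟪b, P nm⟫ := by
    rw [hPmsym, hnm]
    conv_lhs => rw [← hPb]
    rw [hPsym]
  have key : ⟪bp, np⟫ + ⟪bm, nm⟫
      = ⟪bp - Pp b, np⟫ + ⟪bm - Pm b, nm⟫ + ⟪b, (P np - m) + (P nm + m)⟫ := by
    rw [inner_sub_left, inner_sub_left, inner_add_right, inner_sub_right, inner_add_right, h1, h2]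
    ring
  rw [key]
  have e1 : |⟪bp - Pp b, np⟫| ≤ ε₁ := by
    calc |⟪bp - Pp b, np⟫| ≤ ‖bp - Pp b‖ * ‖np‖ := abs_real_inner_le_norm _ _
    _ ≤ ε₁ * 1 := mul_le_mul hbp hnp1 (norm_nonneg _) hε₁
    _ = ε₁ := mul_one _
  have e2 : |⟪bm - Pm b, nm⟫| ≤ ε₁ := by
    calc |⟪bm - Pm b, nm⟫| ≤ ‖bm - Pm b‖ * ‖nm‖ := abs_real_inner_le_norm _ _
    _ ≤ ε₁ * 1 := mul_le_mul hbm hnm1 (norm_nonneg _) hε₁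
    _ = ε₁ := mul_one _
  have e3 : |⟪b, (P np - m) + (P nm + m)⟫| ≤ β * (2 * ε₂) := by
    calc |⟪b, (P np - m) + (P nm + m)⟫| ≤ ‖b‖ * ‖(P np - m) + (P nm + m)‖ :=
      abs_real_inner_le_norm _ _
    _ ≤ β * (2 * ε₂) := by
        refine mul_le_mul hbβ ?_ (norm_nonneg _) hβ
        calc ‖(P np - m) + (P nm + m)‖ ≤ ‖P np - m‖ + ‖P nm + m‖ := norm_add_le _ _
        _ ≤ ε₂ + ε₂ := add_le_add hmp hmm
        _ = 2 * ε₂ := by ring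
  calc |⟪bp - Pp b, np⟫ + ⟪bm - Pm b, nm⟫ + ⟪b, (P np - m) + (P nm + m)⟫|
      ≤ |⟪bp - Pp b, np⟫| + |⟪bm - Pm b, nm⟫| + |⟪b, (P np - m) + (P nm + m)⟫| :=
        (abs_add_le _ _).trans (add_le_add_left (abs_add_le _ _) _)
    _ ≤ ε₁ + ε₁ + β * (2 * ε₂) := by exact add_le_add (add_le_add e1 e2) e3
    _ = 2 * ε₁ + 2 * β * ε₂ := by ring
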